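/- arXiv:2403.19381 — 2 statements merged into one kernel-verified Lean document; each statement's English description precedes it below -/
import Mathlib

section
/- In the conjugate Gaussian sequence model, the Bayesian posterior radius satisfies r_j² := Tr((AᵀA)^α (j(AᵀA + j⁻¹I))⁻¹) = ∑_{i=1}^∞ s_i^{2α}/(j s_i² + 1), where (s_i) are the singular values of A; moreover if s_i ≍ i^{−β} with β > 1/2 and α = 1 then r_j² ≍ j^{−1 + 1/(2β)}. -/
open Real Finset

private lemma bern_neg {q t : ℝ} (hq : 0 < q) (ht0 : 0 < t) (ht1 : t ≤ 1) :
    1 + q * (1 - t) ≤ t ^ (-q) := by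
  rcases le_or_gt 1 q with hq1 | hq1
  · have hs : (0:ℝ) ≤ 1 / t - 1 := by
      have : (1:ℝ) ≤ 1 / t := one_le_one_div ht0 ht1
      linarith
    have h := one_add_mul_self_le_rpow_one_add (s := 1 / t - 1) (by linarith) hq1
    have h2 : (1 + (1 / t - 1)) = t⁻¹ := by field_simp; ring
    rw [h2, Real.inv_rpow ht0.le, ← Real.rpow_neg ht0.le] at h
    have h3 : t * (1 / t - 1) = 1 - t := by field_simp
    have key : 1 - t ≤ 1 / t - 1 := by nlinarith
    nlinarith [mul_le_mul_of_nonneg_left key hq.le]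
  · have h := rpow_one_add_le_one_add_mul_self (s := t - 1) (by linarith) hq.le hq1.le
    have h2 : (1 + (t - 1)) = t := by ring
    rw [h2] at h
    have htq : 0 < t ^ q := Real.rpow_pos_of_pos ht0 q
    rw [← neg_neg q, Real.rpow_neg ht0.le, neg_neg, ← one_div, le_div_iff₀ htq]
    nlinarith [sq_nonneg (q * (1 - t)), mul_le_mul_of_nonneg_left h (by nlinarith : (0:ℝ) ≤ 1 + q * (1 - t))]

private lemma step_ineq {q x : ℝ} (hq : 0 < q) (hx : 1 ≤ x) :
    q * (x + 1) ^ (-(q + 1)) ≤ x ^ (-q) - (x + 1) ^ (-q) := by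
  have hx0 : 0 < x := lt_of_lt_of_le one_pos hx
  have hx1 : 0 < x + 1 := by linarith
  have ht0 : 0 < x / (x + 1) := by positivity
  have ht1 : x / (x + 1) ≤ 1 := by rw [div_le_one hx1]; linarith
  have h := bern_neg hq ht0 ht1
  rw [Real.div_rpow hx0.le hx1.le] at h
  have h1 : 1 - x / (x + 1) = (x + 1)⁻¹ := by field_simp; ring
  rw [h1] at h
  have hp1 : 0 < (x + 1) ^ (-q) := Real.rpow_pos_of_pos hx1 _
  have h2 := mul_le_mul_of_nonneg_right h hp1.le
  rw [div_mul_cancel₀ _ hp1.ne'] at h2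
  have h3 : (x + 1) ^ (-(q + 1)) = (x + 1)⁻¹ * (x + 1) ^ (-q) := by
    rw [show -(q + 1) = (-1) + (-q) by ring, Real.rpow_add hx1, Real.rpow_neg_one]
  rw [h3]
  nlinarith [h2]

private lemma tail_sum {p : ℝ} (hp : 1 < p) {N : ℕ} (hN : 1 ≤ N) {K : ℝ} (hK : 0 ≤ K)
    {f : ℕ → ℝ} (hf0 : ∀ i, 0 ≤ f i)
    (hfle : ∀ i, f i ≤ K * ((N : ℝ) + i + 1) ^ (-p)) :
    ∑' i, f i ≤ K * (N : ℝ) ^ (1 - p) / (p - 1) := by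
  have hq : 0 < p - 1 := by linarith
  set g : ℕ → ℝ := fun k => K * ((N : ℝ) + k) ^ (1 - p) / (p - 1) with hg
  apply Real.tsum_le_of_sum_range_le hf0
  intro n
  have key : ∀ i : ℕ, f i ≤ g i - g (i + 1) := by
    intro i
    have hx : 1 ≤ (N : ℝ) + i := by
      have h1 : (1 : ℝ) ≤ (N : ℝ) := by exact_mod_cast hN
      have h2 : (0 : ℝ) ≤ (i : ℝ) := Nat.cast_nonneg i
      linarith
    have h := step_ineq hq hx
    rw [show -(p - 1 + 1) = -p by ring, show -(p - 1) = 1 - p by ring] at h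
    have h2 := mul_le_mul_of_nonneg_left h (div_nonneg hK hq.le : 0 ≤ K / (p - 1))
    calc f i ≤ K * ((N : ℝ) + i + 1) ^ (-p) := hfle i
      _ ≤ g i - g (i + 1) := by
          simp only [hg]
          push_cast
          have e : (N : ℝ) + ((i : ℝ) + 1) = ((N : ℝ) + i) + 1 := by ring
          rw [e]
          have e2 : K / (p - 1) * ((p - 1) * ((N : ℝ) + i + 1) ^ (-p))
              = K * ((N : ℝ) + i + 1) ^ (-p) := by
            field_simp
          have e3 : K / (p - 1) * (((N : ℝ) + i) ^ (1 - p) - ((N : ℝ) + i + 1) ^ (1 - p))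
              = K * ((N : ℝ) + i) ^ (1 - p) / (p - 1)
                - K * (((N : ℝ) + i) + 1) ^ (1 - p) / (p - 1) := by ring
          rw [e2, e3] at h2
          linarith
  calc ∑ i ∈ range n, f i ≤ ∑ i ∈ range n, (g i - g (i + 1)) := sum_le_sum fun i _ => key i
    _ = g 0 - g n := Finset.sum_range_sub' g n
    _ ≤ g 0 := by
        have : 0 ≤ g n := by
          apply div_nonneg (mul_nonneg hK (Real.rpow_nonneg (by positivity) _)) hq.le
        linarith
    _ = K * (N : ℝ) ^ (1 - p) / (p - 1) := by simp [hg]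
set_option maxHeartbeats 1000000 in
/-- In the conjugate Gaussian sequence model, the Bayesian posterior radius is
`r_j² = ∑_{i=1}^∞ s_i^{2α}/(j s_i² + 1)` in terms of the singular values `(s_i)` of `A`;
if `s_i ≍ i^{−β}` with `β > 1/2` and `α = 1`, then `r_j² ≍ j^{−1 + 1/(2β)}`
(up to multiplicative constants independent of `j`). -/
theorem posterior_radius_asymptotics (s : ℕ → ℝ) (β : ℝ) (hβ : 1 / 2 < β)
    (c C : ℝ) (hc : 0 < c) (hcC : c ≤ C)
    (hs : ∀ i : ℕ, c * ((i : ℝ) + 1) ^ (-β) ≤ s i ∧ s i ≤ C * ((i : ℝ) + 1) ^ (-β))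
    (α : ℝ) (hα : α = 1)
    (r2 : ℕ → ℝ)
    (hr2 : ∀ j : ℕ, r2 j = ∑' i : ℕ, s i ^ (2 * α) / ((j : ℝ) * s i ^ 2 + 1)) :
    ∃ c' C' : ℝ, 0 < c' ∧ 0 < C' ∧ ∀ j : ℕ, 1 ≤ j →
      c' * (j : ℝ) ^ (-1 + 1 / (2 * β)) ≤ r2 j ∧
        r2 j ≤ C' * (j : ℝ) ^ (-1 + 1 / (2 * β)) := by
  subst hα
  set p := 2 * β with hpdef
  have hp : 1 < p := by rw [hpdef]; linarith
  have hp0 : 0 < p := by linarith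
  have hq : 0 < p - 1 := by linarith
  have hspos : ∀ i : ℕ, 0 < s i := fun i => lt_of_lt_of_le (by positivity) (hs i).1
  have hsq : ∀ i : ℕ, c ^ 2 * ((i : ℝ) + 1) ^ (-p) ≤ s i ^ 2 ∧
      s i ^ 2 ≤ C ^ 2 * ((i : ℝ) + 1) ^ (-p) := by
    intro i
    have he : (((i : ℝ) + 1) ^ (-β)) ^ 2 = ((i : ℝ) + 1) ^ (-p) := by
      rw [sq, ← Real.rpow_add (by positivity), hpdef]
      ring_nf
    constructor
    · calc c ^ 2 * ((i : ℝ) + 1) ^ (-p) = (c * ((i : ℝ) + 1) ^ (-β)) ^ 2 := by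
            rw [mul_pow, he]
        _ ≤ s i ^ 2 := pow_le_pow_left₀ (by positivity) (hs i).1 2
    · calc s i ^ 2 ≤ (C * ((i : ℝ) + 1) ^ (-β)) ^ 2 := pow_le_pow_left₀ (hspos i).le (hs i).2 2
        _ = C ^ 2 * ((i : ℝ) + 1) ^ (-p) := by rw [mul_pow, he]
  set F : ℕ → ℕ → ℝ := fun j i => s i ^ 2 / ((j : ℝ) * s i ^ 2 + 1) with hFdef
  have hden : ∀ j i : ℕ, 0 < (j : ℝ) * s i ^ 2 + 1 := fun j i => by positivity
  have hFpos : ∀ j i : ℕ, 0 < F j i := fun j i => div_pos (pow_pos (hspos i) 2) (hden j i)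
  have hr2F : ∀ j : ℕ, r2 j = ∑' i, F j i := by
    intro j
    rw [hr2 j]
    congr 1
    funext i
    rw [show (2 : ℝ) * 1 = ((2 : ℕ) : ℝ) by norm_num, Real.rpow_natCast]
  have ub2 : ∀ j i : ℕ, F j i ≤ C ^ 2 * ((i : ℝ) + 1) ^ (-p) := by
    intro j i
    have h1 : F j i ≤ s i ^ 2 := by
      apply div_le_self (sq_nonneg _)
      have := mul_nonneg (Nat.cast_nonneg j : (0:ℝ) ≤ (j:ℝ)) (sq_nonneg (s i))
      linarith
    exact h1.trans (hsq i).2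
  have hsummable : Summable (fun i : ℕ => C ^ 2 * ((i : ℝ) + 1) ^ (-p)) := by
    apply Summable.mul_left
    have h0 : Summable (fun n : ℕ => (n : ℝ) ^ (-p)) :=
      Real.summable_nat_rpow.mpr (by linarith)
    have h1 := (summable_nat_add_iff 1).mpr h0
    exact h1.congr fun n => by push_cast; ring_nf
  have hsum : ∀ j : ℕ, Summable (F j) := fun j =>
    Summable.of_nonneg_of_le (fun i => (hFpos j i).le) (fun i => ub2 j i) hsummable
  have hC'aux : (0:ℝ) ≤ C ^ 2 * 2 ^ (p - 1) / (p - 1) :=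
    div_nonneg (by positivity) hq.le
  refine ⟨c ^ 2 / (2 * (c ^ 2 + 1)), 1 + C ^ 2 * 2 ^ (p - 1) / (p - 1),
    by positivity, by linarith, ?_⟩
  intro j hj
  have hj0 : (0:ℝ) < (j : ℝ) := by exact_mod_cast hj
  have hj1 : (1:ℝ) ≤ (j : ℝ) := by exact_mod_cast hj
  set x := (j : ℝ) ^ (1 / p) with hxdef
  have hxpos : 0 < x := Real.rpow_pos_of_pos hj0 _
  have hx1 : (1:ℝ) ≤ x := by
    rw [hxdef]
    have h := Real.rpow_le_rpow (by norm_num : (0:ℝ) ≤ 1) hj1 (by positivity : (0:ℝ) ≤ 1 / p)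
    rwa [Real.one_rpow] at h
  have hxp : x ^ p = (j : ℝ) := by
    rw [hxdef, ← Real.rpow_mul hj0.le, one_div_mul_cancel hp0.ne', Real.rpow_one]
  set N := ⌊x⌋₊ with hNdef
  have hN1 : 1 ≤ N := Nat.le_floor (by exact_mod_cast hx1)
  have hNx : (N : ℝ) ≤ x := Nat.floor_le hxpos.le
  have hNR : (1:ℝ) ≤ (N : ℝ) := by exact_mod_cast hN1
  have hx2N : x / 2 ≤ (N : ℝ) := by
    rcases le_or_gt x 2 with h | h
    · linarith
    · have h2 : x - 1 < (N : ℝ) := Nat.sub_one_lt_floor x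
      linarith
  have hexp : (j : ℝ) ^ (-1 + 1 / p) = x / (j : ℝ) := by
    rw [Real.rpow_add hj0, Real.rpow_neg_one, hxdef]
    ring
  constructor
  · -- lower bound
    have hterm : ∀ i ∈ Finset.range N, c ^ 2 / ((c ^ 2 + 1) * (j : ℝ)) ≤ F j i := by
      intro i hi
      have hiN : (i : ℝ) + 1 ≤ (N : ℝ) := by exact_mod_cast Finset.mem_range.mp hi
      have hip : ((i : ℝ) + 1) ^ p ≤ (j : ℝ) := by
        calc ((i : ℝ) + 1) ^ p ≤ x ^ p :=
              Real.rpow_le_rpow (by positivity) (hiN.trans hNx) hp0.le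
          _ = (j : ℝ) := hxp
      have hppos : 0 < ((i : ℝ) + 1) ^ p := by positivity
      have hkey : c ^ 2 ≤ s i ^ 2 * ((i : ℝ) + 1) ^ p := by
        have h3 : ((i : ℝ) + 1) ^ (-p) * ((i : ℝ) + 1) ^ p = 1 := by
          rw [← Real.rpow_add (by positivity)]
          simp
        nlinarith [mul_le_mul_of_nonneg_right (hsq i).1 hppos.le]
      have hd1 : 0 < (j : ℝ) * c ^ 2 + ((i : ℝ) + 1) ^ p := by positivity
      have lb1 : c ^ 2 / ((j : ℝ) * c ^ 2 + ((i : ℝ) + 1) ^ p) ≤ F j i := by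
        rw [hFdef]
        simp only
        rw [div_le_div_iff₀ hd1 (hden j i)]
        nlinarith [hkey]
      refine le_trans ?_ lb1
      have hle : (j : ℝ) * c ^ 2 + ((i : ℝ) + 1) ^ p ≤ (c ^ 2 + 1) * (j : ℝ) := by nlinarith
      gcongr
    have hsumlb : (N : ℝ) * (c ^ 2 / ((c ^ 2 + 1) * (j : ℝ))) ≤ ∑ i ∈ Finset.range N, F j i := by
      have h := Finset.sum_le_sum hterm
      simpa [Finset.sum_const, Finset.card_range, nsmul_eq_mul] using h
    have htsum : ∑ i ∈ Finset.range N, F j i ≤ r2 j := by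
      rw [hr2F j]
      exact Summable.sum_le_tsum (Finset.range N) (fun i _ => (hFpos j i).le) (hsum j)
    have hle : c ^ 2 / (2 * (c ^ 2 + 1)) * (j : ℝ) ^ (-1 + 1 / p) ≤
        (N : ℝ) * (c ^ 2 / ((c ^ 2 + 1) * (j : ℝ))) := by
      rw [hexp]
      have h1 : c ^ 2 / (2 * (c ^ 2 + 1)) * (x / (j : ℝ)) =
          (x / 2) * (c ^ 2 / ((c ^ 2 + 1) * (j : ℝ))) := by
        field_simp
      rw [h1]
      exact mul_le_mul_of_nonneg_right hx2N (by positivity)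
    linarith
  · -- upper bound
    have split : r2 j = ∑ i ∈ Finset.range N, F j i + ∑' i, F j (i + N) := by
      exact (hr2F j).trans (Summable.sum_add_tsum_nat_add N (hsum j)).symm
    have head : ∑ i ∈ Finset.range N, F j i ≤ (j : ℝ) ^ (-1 + 1 / p) := by
      have hub1 : ∀ i ∈ Finset.range N, F j i ≤ 1 / (j : ℝ) := by
        intro i _
        rw [hFdef]
        simp only
        rw [div_le_div_iff₀ (hden j i) hj0]
        nlinarith [sq_nonneg (s i)]
      calc ∑ i ∈ Finset.range N, F j i ≤ ∑ _i ∈ Finset.range N, 1 / (j : ℝ) :=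
            Finset.sum_le_sum hub1
        _ = (N : ℝ) * (1 / (j : ℝ)) := by
            simp [Finset.sum_const, Finset.card_range]
        _ ≤ x * (1 / (j : ℝ)) := by
            apply mul_le_mul_of_nonneg_right hNx (by positivity)
        _ = (j : ℝ) ^ (-1 + 1 / p) := by rw [hexp]; ring
    have tail : ∑' i : ℕ, F j (i + N) ≤ C ^ 2 * (N : ℝ) ^ (1 - p) / (p - 1) := by
      apply tail_sum hp hN1 (by positivity : (0:ℝ) ≤ C ^ 2) (fun i => (hFpos j _).le)
      intro i
      calc F j (i + N) ≤ C ^ 2 * (((i + N : ℕ) : ℝ) + 1) ^ (-p) := ub2 j (i + N)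
        _ = C ^ 2 * ((N : ℝ) + i + 1) ^ (-p) := by
            congr 2
            push_cast
            ring
    have tail2 : C ^ 2 * (N : ℝ) ^ (1 - p) / (p - 1) ≤
        C ^ 2 * 2 ^ (p - 1) / (p - 1) * (j : ℝ) ^ (-1 + 1 / p) := by
      have h1 : (N : ℝ) ^ (1 - p) ≤ (x / 2) ^ (1 - p) :=
        Real.rpow_le_rpow_of_nonpos (by positivity) hx2N (by linarith)
      have h2 : (x / 2) ^ (1 - p) = 2 ^ (p - 1) * x ^ (1 - p) := by
        rw [Real.div_rpow hxpos.le (by norm_num), div_eq_mul_inv,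
          ← Real.rpow_neg (by norm_num : (0:ℝ) ≤ 2), neg_sub]
        ring
      have h3 : x ^ (1 - p) = (j : ℝ) ^ (-1 + 1 / p) := by
        rw [hxdef, ← Real.rpow_mul hj0.le]
        congr 1
        field_simp
        ring
      calc C ^ 2 * (N : ℝ) ^ (1 - p) / (p - 1) ≤ C ^ 2 * (x / 2) ^ (1 - p) / (p - 1) := by
            gcongr
        _ = C ^ 2 * 2 ^ (p - 1) / (p - 1) * (j : ℝ) ^ (-1 + 1 / p) := by
            rw [h2, h3]
            ring
    rw [split]
    have := tail.trans tail2
    have hfinal : (1 + C ^ 2 * 2 ^ (p - 1) / (p - 1)) * (j : ℝ) ^ (-1 + 1 / p) =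
        (j : ℝ) ^ (-1 + 1 / p) + C ^ 2 * 2 ^ (p - 1) / (p - 1) * (j : ℝ) ^ (-1 + 1 / p) := by
      ring
    rw [hfinal]
    exact add_le_add head this
end

section
/- In the linear-Gaussian model, the sequential update θ̂_{j} = θ̂_{j-1} + j⁻¹(AᵀA + j⁻¹I)⁻¹ Aᵀ(z_j − Aθ̂_{j-1}) applied to the posterior mean reproduces the posterior mean: if θ̂_{j-1} = (AᵀA + (j−1)⁻¹I)⁻¹ Aᵀ z̄_{j-1}, then θ̂_j = (AᵀA + j⁻¹I)⁻¹ Aᵀ z̄_j, where z̄_j = (1/j)∑_{i=1}^j z_i. -/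
open scoped Matrix

/-- In the linear-Gaussian model, the sequential update
`θ̂_j = θ̂_{j-1} + j⁻¹ (AᵀA + j⁻¹I)⁻¹ Aᵀ (z_j − A θ̂_{j-1})`
applied to the previous posterior mean reproduces the posterior mean: if
`θ̂_{j-1} = (AᵀA + (j−1)⁻¹I)⁻¹ Aᵀ z̄_{j-1}`, then
`θ̂_j = (AᵀA + j⁻¹I)⁻¹ Aᵀ z̄_j`, where `z̄_j = (1/j) ∑_{i=1}^j z_i`. -/
theorem linear_gaussian_sequential_update {m k : ℕ} (j : ℕ) (hj : 2 ≤ j)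
    (A : Matrix (Fin k) (Fin m) ℝ)
    (hdet : ∀ ε : ℝ, 0 < ε →
      IsUnit (A.transpose * A + ε • (1 : Matrix (Fin m) (Fin m) ℝ)).det)
    (z : ℕ → (Fin k → ℝ))
    (zbar : ℕ → (Fin k → ℝ))
    (hzbar : ∀ n : ℕ, 1 ≤ n → zbar n = (n : ℝ)⁻¹ • ∑ i ∈ Finset.Icc 1 n, z i)
    (θprev : Fin m → ℝ)
    (hprev : θprev = ((A.transpose * A + ((j : ℝ) - 1)⁻¹ • 1)⁻¹).mulVec
      (A.transpose.mulVec (zbar (j - 1)))) :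
    θprev + (j : ℝ)⁻¹ • ((A.transpose * A + (j : ℝ)⁻¹ • 1)⁻¹).mulVec
        (A.transpose.mulVec (z j - A.mulVec θprev))
      = ((A.transpose * A + (j : ℝ)⁻¹ • 1)⁻¹).mulVec (A.transpose.mulVec (zbar j)) := by
  obtain ⟨n, rfl⟩ : ∃ n, j = n + 1 := ⟨j - 1, by omega⟩
  have hn : 1 ≤ n := by omega
  have hnpos : (0:ℝ) < (n:ℝ) := by exact_mod_cast Nat.pos_of_ne_zero (by omega)
  have hn0 : (n:ℝ) ≠ 0 := ne_of_gt hnpos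
  have hjr : ((n + 1 : ℕ) : ℝ) = (n:ℝ) + 1 := by push_cast; ring
  have hjpos : (0:ℝ) < (n:ℝ) + 1 := by linarith
  have hj0 : (n:ℝ) + 1 ≠ 0 := ne_of_gt hjpos
  simp only [Nat.add_sub_cancel, hjr, add_sub_cancel_right] at hprev ⊢
  set B : Matrix (Fin m) (Fin m) ℝ := A.transpose * A with hB
  set M : Matrix (Fin m) (Fin m) ℝ := B + ((n:ℝ)+1)⁻¹ • 1 with hM
  set N : Matrix (Fin m) (Fin m) ℝ := B + (n:ℝ)⁻¹ • 1 with hN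
  have hMu : IsUnit M.det := hdet _ (by positivity)
  have hNu : IsUnit N.det := hdet _ (by positivity)
  have cancel : ∀ v : Fin m → ℝ, M.mulVec (M⁻¹.mulVec v) = v := by
    intro v
    rw [Matrix.mulVec_mulVec, Matrix.mul_nonsing_inv _ hMu, Matrix.one_mulVec]
  have cancel' : ∀ v : Fin m → ℝ, M⁻¹.mulVec (M.mulVec v) = v := by
    intro v
    rw [Matrix.mulVec_mulVec, Matrix.nonsing_inv_mul _ hMu, Matrix.one_mulVec]
  -- key fact from hprev: N.mulVec θprev = Aᵀ (zbar n)
  have hkey : N.mulVec θprev = A.transpose.mulVec (zbar n) := by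
    rw [hprev, Matrix.mulVec_mulVec, Matrix.mul_nonsing_inv _ hNu, Matrix.one_mulVec]
  -- reduce to M-multiplied equation
  have hsum : (∑ i ∈ Finset.Icc 1 (n+1), z i) = (∑ i ∈ Finset.Icc 1 n, z i) + z (n+1) := by
    rw [Finset.sum_Icc_succ_top (by omega)]
  suffices h : M.mulVec (θprev + ((n:ℝ)+1)⁻¹ • M⁻¹.mulVec
      (A.transpose.mulVec (z (n+1) - A.mulVec θprev)))
      = M.mulVec (M⁻¹.mulVec (A.transpose.mulVec (zbar (n+1)))) by
    have := congrArg (fun v => M⁻¹.mulVec v) h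
    simpa only [cancel'] using this
  rw [cancel]
  have hBu : A.transpose.mulVec (A.mulVec θprev) = B.mulVec θprev := by
    rw [Matrix.mulVec_mulVec]
  have hNexp : N.mulVec θprev = B.mulVec θprev + (n:ℝ)⁻¹ • θprev := by
    rw [hN, Matrix.add_mulVec, Matrix.smul_mulVec, Matrix.one_mulVec]
  have hMexp : M.mulVec θprev = B.mulVec θprev + ((n:ℝ)+1)⁻¹ • θprev := by
    rw [hM, Matrix.add_mulVec, Matrix.smul_mulVec, Matrix.one_mulVec]
  have hs : A.transpose.mulVec (zbar n) = (n:ℝ)⁻¹ • A.transpose.mulVec (∑ i ∈ Finset.Icc 1 n, z i) := by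
    rw [hzbar n hn, Matrix.mulVec_smul]
  have hkey2 : B.mulVec θprev + (n:ℝ)⁻¹ • θprev
      = (n:ℝ)⁻¹ • A.transpose.mulVec (∑ i ∈ Finset.Icc 1 n, z i) := by
    rw [← hNexp, hkey, hs]
  have hS : A.transpose.mulVec (∑ i ∈ Finset.Icc 1 n, z i)
      = (n:ℝ) • B.mulVec θprev + θprev := by
    have := congrArg (fun v => (n:ℝ) • v) hkey2
    simp only [smul_add, smul_smul, mul_inv_cancel₀ hn0, one_smul] at this
    exact this.symm
  rw [Matrix.mulVec_add, Matrix.mulVec_smul, cancel, hMexp, Matrix.mulVec_sub, hBu, hzbar (n+1) (by omega), hjr,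
    Matrix.mulVec_smul, hsum, Matrix.mulVec_add, hS]
  match_scalars <;> field_simp <;> ring
end
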